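/- arXiv:1707.07645 — 2 statements merged into one kernel-verified Lean document; each statement's English description precedes it below -/
import Mathlib

section
/- Let u : ℝ² → ℝ be a C³ solution of u_yy = (u_y + 2x)·u_xx + (y − u_x)·u_xy − u_x. Then the function v(x,y) := −y − (1/2)·u_x(x,y) satisfies the linearized equation v_yy = (u_y + 2x)·v_xx + u_xx·v_y + (y − u_x)·v_xy − (u_xy + 1)·v_x at every point of ℝ². -/
/-- Partial derivative of `f : ℝ² → ℝ` in the direction `v`. -/
noncomputable def pd2 (v : ℝ × ℝ) (f : ℝ × ℝ → ℝ) : ℝ × ℝ → ℝ :=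
  fun p => fderiv ℝ f p v

noncomputable def dx : (ℝ × ℝ → ℝ) → ℝ × ℝ → ℝ := pd2 (1, 0)
noncomputable def dy : (ℝ × ℝ → ℝ) → ℝ × ℝ → ℝ := pd2 (0, 1)

section Aux

variable {f g : ℝ × ℝ → ℝ} {p : ℝ × ℝ}

lemma pd2_contDiff {n m : WithTop ℕ∞} (v : ℝ × ℝ) (hf : ContDiff ℝ n f)
    (h : m + 1 ≤ n) : ContDiff ℝ m (pd2 v f) :=
  (hf.fderiv_right h).clm_apply contDiff_const

lemma pd2_add (v : ℝ × ℝ) (hf : DifferentiableAt ℝ f p) (hg : DifferentiableAt ℝ g p) :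
    pd2 v (fun q => f q + g q) p = pd2 v f p + pd2 v g p := by
  simp [pd2, fderiv_fun_add hf hg]

lemma pd2_sub (v : ℝ × ℝ) (hf : DifferentiableAt ℝ f p) (hg : DifferentiableAt ℝ g p) :
    pd2 v (fun q => f q - g q) p = pd2 v f p - pd2 v g p := by
  simp [pd2, fderiv_fun_sub hf hg]

lemma pd2_mul (v : ℝ × ℝ) (hf : DifferentiableAt ℝ f p) (hg : DifferentiableAt ℝ g p) :
    pd2 v (fun q => f q * g q) p = f p * pd2 v g p + g p * pd2 v f p := by
  simp [pd2, fderiv_fun_mul hf hg]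

lemma pd2_const_mul (v : ℝ × ℝ) (c : ℝ) (hf : DifferentiableAt ℝ f p) :
    pd2 v (fun q => c * f q) p = c * pd2 v f p := by
  simp [pd2, fderiv_const_mul hf c]

lemma pd2_fst (v p : ℝ × ℝ) : pd2 v (fun q : ℝ × ℝ => q.1) p = v.1 := by
  simp [pd2, show (fun q : ℝ × ℝ => q.1) = Prod.fst from rfl, fderiv_fst]

lemma pd2_snd (v p : ℝ × ℝ) : pd2 v (fun q : ℝ × ℝ => q.2) p = v.2 := by
  simp [pd2, show (fun q : ℝ × ℝ => q.2) = Prod.snd from rfl, fderiv_snd]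

lemma pd2_neg_snd_sub_const_mul (v p : ℝ × ℝ) (c : ℝ) (hf : DifferentiableAt ℝ f p) :
    pd2 v (fun q => -q.2 - c * f q) p = -v.2 - c * pd2 v f p := by
  have h1 : DifferentiableAt ℝ (fun q : ℝ × ℝ => -q.2) p := differentiableAt_snd.neg
  rw [pd2_sub v h1 (hf.const_mul c), pd2_const_mul v c hf]
  have : pd2 v (fun q : ℝ × ℝ => -q.2) p = -v.2 := by
    have := pd2_snd v p
    simp only [pd2] at this ⊢
    rw [fderiv_fun_neg]
    simp [this]
  rw [this]

lemma pd2_const_sub_const_mul (v p : ℝ × ℝ) (c₀ c : ℝ) (hf : DifferentiableAt ℝ f p) :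
    pd2 v (fun q => c₀ - c * f q) p = -(c * pd2 v f p) := by
  rw [pd2_sub v (differentiableAt_const c₀) (hf.const_mul c), pd2_const_mul v c hf]
  simp [pd2]

lemma pd2_pd2_eq (hf : ContDiff ℝ 2 f) (a b p : ℝ × ℝ) :
    pd2 a (pd2 b f) p = fderiv ℝ (fderiv ℝ f) p a b := by
  have hdf : DifferentiableAt ℝ (fderiv ℝ f) p := by
    have : ContDiff ℝ 1 (fderiv ℝ f) := hf.fderiv_right (by norm_num)
    exact (this.differentiable (by norm_num)) p
  show fderiv ℝ (fun q => (fderiv ℝ f q) b) p a = _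
  rw [show (fun q => (fderiv ℝ f q) b) = (fun q => (fderiv ℝ f q) ((fun _ : ℝ × ℝ => b) q)) from rfl,
    fderiv_clm_apply hdf (differentiableAt_const b)]
  simp

lemma pd2_comm (hf : ContDiff ℝ 2 f) (a b p : ℝ × ℝ) :
    pd2 a (pd2 b f) p = pd2 b (pd2 a f) p := by
  rw [pd2_pd2_eq hf, pd2_pd2_eq hf]
  exact (hf.contDiffAt.isSymmSndFDerivAt (by simp [minSmoothness_of_isRCLikeNormedField])) a b

end Aux

theorem gamma_m2_is_symmetry (u : ℝ × ℝ → ℝ) (hu : ContDiff ℝ 3 u)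
    (heq : ∀ p : ℝ × ℝ,
      dy (dy u) p = (dy u p + 2 * p.1) * dx (dx u) p
        + (p.2 - dx u p) * dx (dy u) p - dx u p) :
    ∀ p : ℝ × ℝ,
      (fun v : ℝ × ℝ → ℝ =>
        dy (dy v) p = (dy u p + 2 * p.1) * dx (dx v) p + dx (dx u) p * dy v p
          + (p.2 - dx u p) * dx (dy v) p - (dx (dy u) p + 1) * dx v p)
      (fun q => -q.2 - (1 / 2) * dx u q) := by
  intro p
  -- regularity
  have hux2 : ContDiff ℝ 2 (dx u) := pd2_contDiff _ hu (by norm_num)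
  have huy2 : ContDiff ℝ 2 (dy u) := pd2_contDiff _ hu (by norm_num)
  have huxx1 : ContDiff ℝ 1 (dx (dx u)) := pd2_contDiff _ hux2 (by norm_num)
  have huxy1 : ContDiff ℝ 1 (dx (dy u)) := pd2_contDiff _ huy2 (by norm_num)
  have huyx1 : ContDiff ℝ 1 (dy (dx u)) := pd2_contDiff _ hux2 (by norm_num)
  have huyy1 : ContDiff ℝ 1 (dy (dy u)) := pd2_contDiff _ huy2 (by norm_num)
  have dux : ∀ q, DifferentiableAt ℝ (dx u) q := fun q => (hux2.differentiable (by norm_num)) q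
  have duy : ∀ q, DifferentiableAt ℝ (dy u) q := fun q => (huy2.differentiable (by norm_num)) q
  have duxx : ∀ q, DifferentiableAt ℝ (dx (dx u)) q := fun q => (huxx1.differentiable (by norm_num)) q
  have duxy : ∀ q, DifferentiableAt ℝ (dx (dy u)) q := fun q => (huxy1.differentiable (by norm_num)) q
  have duyx : ∀ q, DifferentiableAt ℝ (dy (dx u)) q := fun q => (huyx1.differentiable (by norm_num)) q
  -- commutation of mixed partials
  have hcomm : dy (dx u) = dx (dy u) := by
    funext q
    exact pd2_comm (hu.of_le (by norm_num)) (0, 1) (1, 0) q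
  -- first derivatives of v
  have hvx : dx (fun q => -q.2 - (1 / 2) * dx u q) = fun q => -(0:ℝ) - (1 / 2) * dx (dx u) q := by
    funext q
    exact pd2_neg_snd_sub_const_mul (1, 0) q (1 / 2) (dux q)
  have hvy : dy (fun q => -q.2 - (1 / 2) * dx u q) = fun q => -(1:ℝ) - (1 / 2) * dy (dx u) q := by
    funext q
    exact pd2_neg_snd_sub_const_mul (0, 1) q (1 / 2) (dux q)
  -- second derivatives of v
  have hvxx : dx (dx (fun q => -q.2 - (1 / 2) * dx u q)) p
      = -((1 / 2) * dx (dx (dx u)) p) := by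
    rw [hvx]; exact pd2_const_sub_const_mul (1, 0) p (-(0:ℝ)) (1 / 2) (duxx p)
  have hvxy : dx (dy (fun q => -q.2 - (1 / 2) * dx u q)) p
      = -((1 / 2) * dx (dx (dy u)) p) := by
    rw [hvy, hcomm]; exact pd2_const_sub_const_mul (1, 0) p (-(1:ℝ)) (1 / 2) (duxy p)
  have hvyy : dy (dy (fun q => -q.2 - (1 / 2) * dx u q)) p
      = -((1 / 2) * dx (dy (dy u)) p) := by
    rw [hvy, hcomm]
    have h1 : dy (fun q => -(1:ℝ) - 1 / 2 * dx (dy u) q) p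
        = -(1 / 2 * dy (dx (dy u)) p) :=
      pd2_const_sub_const_mul (0, 1) p (-(1:ℝ)) (1 / 2) (duxy p)
    have h2 : dy (dx (dy u)) p = dx (dy (dy u)) p := pd2_comm huy2 (0, 1) (1, 0) p
    rw [h1, h2]
  -- differentiate the equation in x
  have heqfun : dy (dy u) = fun q => (dy u q + 2 * q.1) * dx (dx u) q
      + (q.2 - dx u q) * dx (dy u) q - dx u q := funext heq
  have hdiff : dx (dy (dy u)) p
      = ((dx (dy u) p + 2) * dx (dx u) p + (dy u p + 2 * p.1) * dx (dx (dx u)) p)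
        + ((0 - dx (dx u) p) * dx (dy u) p + (p.2 - dx u p) * dx (dx (dy u)) p)
        - dx (dx u) p := by
    have hA : ∀ q, DifferentiableAt ℝ (fun q : ℝ × ℝ => dy u q + 2 * q.1) q :=
      fun q => (duy q).add (differentiableAt_fst.const_mul 2)
    have hC : ∀ q, DifferentiableAt ℝ (fun q : ℝ × ℝ => q.2 - dx u q) q :=
      fun q => differentiableAt_snd.sub (dux q)
    have h1 : dx (dy (dy u)) p = pd2 (1, 0)
        (fun q => ((dy u q + 2 * q.1) * dx (dx u) q + (q.2 - dx u q) * dx (dy u) q)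
          - dx u q) p := by
      rw [show dy (dy u) = fun q => ((dy u q + 2 * q.1) * dx (dx u) q
          + (q.2 - dx u q) * dx (dy u) q) - dx u q from heqfun]
      rfl
    rw [h1, pd2_sub (1, 0) (((hA p).fun_mul (duxx p)).fun_add ((hC p).fun_mul (duxy p))) (dux p),
      pd2_add (1, 0) ((hA p).fun_mul (duxx p)) ((hC p).fun_mul (duxy p)),
      pd2_mul (1, 0) (hA p) (duxx p), pd2_mul (1, 0) (hC p) (duxy p),
      pd2_add (1, 0) (duy p) (differentiableAt_fst.const_mul 2),
      pd2_sub (1, 0) differentiableAt_snd (dux p),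
      pd2_const_mul (1, 0) 2 differentiableAt_fst, pd2_fst, pd2_snd]
    have h2 : pd2 (1, 0) (dy u) p = dx (dy u) p := rfl
    have h3 : pd2 (1, 0) (dx u) p = dx (dx u) p := rfl
    have h4 : pd2 (1, 0) (dx (dx u)) p = dx (dx (dx u)) p := rfl
    have h5 : pd2 (1, 0) (dx (dy u)) p = dx (dx (dy u)) p := rfl
    rw [h2, h3, h4, h5]
    ring
  rw [hvxx, hvxy, hvyy, hvx, hvy, hdiff, hcomm]
  ring
end

section
/- Let U ⊆ ℝ² be open, let u : U → ℝ be a C² solution of u_yy = (u_y + y)·u_xx − u_x·u_xy − 2, let k ∈ ℝ, and let z, a, b : U → ℝ be functions with z of class C¹ and a, b of class C², satisfying on all of U: a_x = z_y + u_x·z_x, b_x = a_y + u_x·a_x, and b_y = (u_y + y)·a_x − k·z. Then the identity ∂_y(b_y + u_x·b_x) = ∂_x((u_y + y)·b_x − (k+1)·a) holds at every point of U; equivalently, b_yy + u_x·b_xy − (u_y + y)·b_xx + (k+1)·a_x = 0 on U. -/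
lemma pd2_diff {f : ℝ × ℝ → ℝ} {p : ℝ × ℝ} (hf : ContDiffAt ℝ 2 f p) (v : ℝ × ℝ) :
    DifferentiableAt ℝ (pd2 v f) p := by
  have h1 : ContDiffAt ℝ 1 (fderiv ℝ f) p := hf.fderiv_right (m := 1) le_rfl
  exact (h1.differentiableAt one_ne_zero).clm_apply (differentiableAt_const v)

lemma pd2_pd2 {f : ℝ × ℝ → ℝ} {p : ℝ × ℝ} (hf : ContDiffAt ℝ 2 f p) (v w : ℝ × ℝ) :
    pd2 w (pd2 v f) p = fderiv ℝ (fderiv ℝ f) p w v := by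
  have h1 : ContDiffAt ℝ 1 (fderiv ℝ f) p := hf.fderiv_right (m := 1) le_rfl
  have h2 := fderiv_clm_apply (h1.differentiableAt one_ne_zero) (differentiableAt_const v)
  show fderiv ℝ (fun y => (fderiv ℝ f y) v) p w = _
  rw [h2]
  simp

theorem covering_compatibility_eq2 (U : Set (ℝ × ℝ)) (hU : IsOpen U)
    (u z a b : ℝ × ℝ → ℝ) (k : ℝ)
    (hu : ContDiffOn ℝ 2 u U) (hz : ContDiffOn ℝ 1 z U)
    (ha : ContDiffOn ℝ 2 a U) (hb : ContDiffOn ℝ 2 b U)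
    (hueq : ∀ p ∈ U,
      dy (dy u) p = (dy u p + p.2) * dx (dx u) p - dx u p * dx (dy u) p - 2)
    (hax : ∀ p ∈ U, dx a p = dy z p + dx u p * dx z p)
    (hbx : ∀ p ∈ U, dx b p = dy a p + dx u p * dx a p)
    (hby : ∀ p ∈ U, dy b p = (dy u p + p.2) * dx a p - k * z p) :
    ∀ p ∈ U,
      dy (dy b) p + dx u p * dx (dy b) p - (dy u p + p.2) * dx (dx b) p
        + (k + 1) * dx a p = 0 := by
  intro p hp
  have hmem : U ∈ nhds p := hU.mem_nhds hp
  have huA : ContDiffAt ℝ 2 u p := (hu p hp).contDiffAt hmem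
  have haA : ContDiffAt ℝ 2 a p := (ha p hp).contDiffAt hmem
  have hzA : ContDiffAt ℝ 1 z p := (hz p hp).contDiffAt hmem
  have Hz : HasFDerivAt z (fderiv ℝ z p) p :=
    (hzA.differentiableAt one_ne_zero).hasFDerivAt
  have Hdyu : HasFDerivAt (dy u) (fderiv ℝ (dy u) p) p := (pd2_diff huA _).hasFDerivAt
  have Hdxu : HasFDerivAt (dx u) (fderiv ℝ (dx u) p) p := (pd2_diff huA _).hasFDerivAt
  have Hdya : HasFDerivAt (dy a) (fderiv ℝ (dy a) p) p := (pd2_diff haA _).hasFDerivAt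
  have Hdxa : HasFDerivAt (dx a) (fderiv ℝ (dx a) p) p := (pd2_diff haA _).hasFDerivAt
  have Hsnd : HasFDerivAt (fun q : ℝ × ℝ => q.2) (ContinuousLinearMap.snd ℝ ℝ ℝ) p :=
    hasFDerivAt_snd
  -- eventual equalities
  have hbyE : dy b =ᶠ[nhds p] fun q => (dy u q + q.2) * dx a q - k * z q :=
    Filter.eventuallyEq_of_mem hmem hby
  have hbxE : dx b =ᶠ[nhds p] fun q => dy a q + dx u q * dx a q :=
    Filter.eventuallyEq_of_mem hmem hbx
  -- E1
  have E1 : dy (dy b) p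
      = (dy (dy u) p + 1) * dx a p + (dy u p + p.2) * dy (dx a) p - k * dy z p := by
    have h := ((Hdyu.add Hsnd).mul Hdxa).sub (Hz.const_mul k)
    show fderiv ℝ (dy b) p (0, 1) = _
    rw [hbyE.fderiv_eq, HasFDerivAt.fderiv (f := (fun q => (dy u q + q.2) * dx a q - k * z q)) h]
    simp [dx, dy, pd2]
    ring
  -- E2
  have E2 : dx (dy b) p
      = dx (dy u) p * dx a p + (dy u p + p.2) * dx (dx a) p - k * dx z p := by
    have h := ((Hdyu.add Hsnd).mul Hdxa).sub (Hz.const_mul k)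
    show fderiv ℝ (dy b) p (1, 0) = _
    rw [hbyE.fderiv_eq, HasFDerivAt.fderiv (f := (fun q => (dy u q + q.2) * dx a q - k * z q)) h]
    simp [dx, dy, pd2]
    ring
  -- E3
  have E3 : dx (dx b) p
      = dx (dy a) p + dx (dx u) p * dx a p + dx u p * dx (dx a) p := by
    have h := Hdya.add (Hdxu.mul Hdxa)
    show fderiv ℝ (dx b) p (1, 0) = _
    rw [hbxE.fderiv_eq, HasFDerivAt.fderiv (f := (fun q => dy a q + dx u q * dx a q)) h]
    simp [dx, dy, pd2]
    ring
  -- Clairaut for a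
  have E4 : dy (dx a) p = dx (dy a) p := by
    show pd2 (0, 1) (pd2 (1, 0) a) p = pd2 (1, 0) (pd2 (0, 1) a) p
    rw [pd2_pd2 haA, pd2_pd2 haA]
    exact haA.isSymmSndFDerivAt (by simp [minSmoothness_of_isRCLikeNormedField]) (0, 1) (1, 0)
  rw [E1, E2, E3, E4, hueq p hp, hax p hp]
  ring
end
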